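/- Suppose 𝓗 is a k-uniform hypergraph on vertex set [l], G is a subgraph of Q_n, S ⊆ [n] with |S| = j+1-k, and 𝓘 is the k-uniform hypergraph on [n] \ S whose edges are the k-sets I ⊆ [n] \ S such that for every i ∈ I, replacing coordinate i of the characteristic vector of S ∪ I by a flip-bit yields an edge of G. If g : [l] → [n] \ S is an injective embedding of 𝓗 into 𝓘, and H ⊆ Q_l is a subgraph with representation 𝓗 (every edge of H has exactly k non-zero bits whose position set maps under τ into E(𝓗)), then the map f : Q_l → Q_n sending [a_1...a_l] with non-zero positions i_1,...,i_r to the characteristic vector of S ∪ {g(i_1),...,g(i_r)} is a graph embedding of H into G. -/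

import Mathlib

/-- The hypercube graph `Q n`. -/
def Q (n : ℕ) : SimpleGraph (Fin n → Bool) where
  Adj u v := hammingDist u v = 1
  symm := ⟨fun u v h => by simpa [hammingDist_comm] using h⟩
  loopless := ⟨fun u h => by simp [hammingDist_self] at h⟩

/-- The support (set of 1-coordinates) of a vertex of the hypercube. -/
def supp {n : ℕ} (v : Fin n → Bool) : Finset (Fin n) :=
  Finset.univ.filter fun i => v i = true

/-- The characteristic vector of a set of coordinates. -/
def χ {n : ℕ} (T : Finset (Fin n)) : Fin n → Bool := fun i => decide (i ∈ T)

/-- embedding lemma: suppose `𝓗` is a k-uniform hypergraph on `[l]`,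
`G ≤ Q n`, `S ⊆ [n]` has size `j+1-k`, and `g : [l] → [n] \ S` is injective with the
property that for each edge `e` of `𝓗` and each `i ∈ g(e)`, replacing coordinate `i` of
the characteristic vector of `S ∪ g(e)` by a flip-bit yields an edge of `G` (i.e. `𝓗`
embeds via `g` into the auxiliary hypergraph `𝓘`).  If `H ≤ Q l` has representation `𝓗`
(each edge of `H` has exactly `k` non-zero bits, forming an edge of `𝓗`), then the map
`f` sending `a` to the characteristic vector of `S ∪ g(supp a)` is an embedding of `H`
into `G`. -/

lemma chi_inj {n : ℕ} : Function.Injective (χ (n := n)) := by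
  intro T T' h
  ext i
  have := congrFun h i
  simpa [χ, decide_eq_decide] using this

lemma mem_supp {n : ℕ} {v : Fin n → Bool} {i : Fin n} : i ∈ supp v ↔ v i = true := by
  simp [supp]

theorem embedding_lemma
    (k l n j : ℕ)
    (𝓗 : Finset (Finset (Fin l))) (h𝓗unif : ∀ e ∈ 𝓗, e.card = k)
    (G : SimpleGraph (Fin n → Bool)) (hG : G ≤ Q n)
    (S : Finset (Fin n)) (hScard : S.card = j + 1 - k)
    (g : Fin l → Fin n) (hginj : Function.Injective g) (hgS : ∀ x, g x ∉ S)
    (hgemb : ∀ e ∈ 𝓗, ∀ i ∈ e.image g,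
      G.Adj (χ ((S ∪ e.image g).erase i)) (χ (S ∪ e.image g)))
    (H : SimpleGraph (Fin l → Bool)) (hH : H ≤ Q l)
    (hrep : ∀ u v, H.Adj u v → (supp u ∪ supp v).card = k ∧ supp u ∪ supp v ∈ 𝓗) :
    Function.Injective (fun a : Fin l → Bool => χ (S ∪ (supp a).image g)) ∧
    ∀ u v, H.Adj u v →
      G.Adj (χ (S ∪ (supp u).image g)) (χ (S ∪ (supp v).image g))  := by
  have key : ∀ u v, H.Adj u v →
      G.Adj (χ (S ∪ (supp u).image g)) (χ (S ∪ (supp v).image g)) := by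
    intro u v huv
    obtain ⟨hcard, hmem⟩ := hrep u v huv
    have hQ : hammingDist u v = 1 := hH huv
    rw [hammingDist, Finset.card_eq_one] at hQ
    obtain ⟨i, hi⟩ := hQ
    have hine : u i ≠ v i := by
      have : i ∈ Finset.filter (fun i => u i ≠ v i) Finset.univ := by
        rw [hi]; exact Finset.mem_singleton_self i
      simpa using this
    have heq : ∀ x, x ≠ i → u x = v x := by
      intro x hx
      by_contra hne
      have : x ∈ Finset.filter (fun i => u i ≠ v i) Finset.univ := by simpa using hne
      rw [hi, Finset.mem_singleton] at this
      exact hx this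
    -- main computation for the case v i = true, u i = false
    have main : ∀ u v : Fin l → Bool, (∀ x, x ≠ i → u x = v x) → u i = false → v i = true →
        (supp u ∪ supp v ∈ 𝓗) →
        G.Adj (χ (S ∪ (supp u).image g)) (χ (S ∪ (supp v).image g)) := by
      intro u v heq hu hv hmem
      have hsub : supp u ⊆ supp v := by
        intro x hx
        rcases eq_or_ne x i with rfl | hxi
        · exact mem_supp.mpr hv
        · exact mem_supp.mpr (by rw [← heq x hxi]; exact mem_supp.mp hx)
      have hunion : supp u ∪ supp v = supp v := Finset.union_eq_right.mpr hsub
      have hiu : i ∉ supp u := by simp [mem_supp, hu]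
      have hiv : i ∈ supp v := mem_supp.mpr hv
      have hsuppu : supp u = (supp v).erase i := by
        ext x
        simp only [Finset.mem_erase]
        constructor
        · intro hx
          refine ⟨fun h => hiu (h ▸ hx), hsub hx⟩
        · rintro ⟨hxi, hxv⟩
          exact mem_supp.mpr (by rw [heq x hxi]; exact mem_supp.mp hxv)
      have h1 : (supp u).image g = ((supp v).image g).erase (g i) := by
        rw [hsuppu, Finset.image_erase hginj]
      have h2 : S ∪ ((supp v).image g).erase (g i) = (S ∪ (supp v).image g).erase (g i) := by
        rw [Finset.erase_union_distrib, Finset.erase_eq_of_notMem (hgS i)]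
      have := hgemb (supp v) (hunion ▸ hmem) (g i) (Finset.mem_image_of_mem g hiv)
      rw [h1, h2]
      exact this
    cases hvb : v i
    · cases hub : u i
      · exact absurd (hub.trans hvb.symm) hine
      · exact (main v u (fun x hx => (heq x hx).symm) hvb hub
          (by rwa [Finset.union_comm])).symm
    · cases hub : u i
      · exact main u v heq hub hvb hmem
      · exact absurd (hub.trans hvb.symm) hine
  refine ⟨?_, key⟩
  intro a b hab
  have h : S ∪ (supp a).image g = S ∪ (supp b).image g := chi_inj hab
  have himg : (supp a).image g = (supp b).image g := by
    ext x
    constructor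
    · intro hx
      obtain ⟨y, hy, rfl⟩ := Finset.mem_image.mp hx
      have : g y ∈ S ∪ (supp b).image g := h ▸ Finset.mem_union_right _ hx
      rcases Finset.mem_union.mp this with h' | h'
      · exact absurd h' (hgS y)
      · exact h'
    · intro hx
      obtain ⟨y, hy, rfl⟩ := Finset.mem_image.mp hx
      have : g y ∈ S ∪ (supp a).image g := h ▸ Finset.mem_union_right _ hx
      rcases Finset.mem_union.mp this with h' | h'
      · exact absurd h' (hgS y)
      · exact h'
  have hsupp : supp a = supp b := by
    have := Finset.image_injective hginj himg
    exact this
  ext x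
  cases hax : a x <;> cases hbx : b x <;> first
  | rfl
  | · exfalso
      have h1 := mem_supp (v := a) (i := x)
      have h2 := mem_supp (v := b) (i := x)
      rw [hsupp] at h1
      simp [hax, hbx] at h1 h2
      tauto
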